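/- Fix β ∈ (1,∞) and let g(x) = (β/(1-β))²·[(1+x^(-β))^((1-β)/β) - 2^((1-β)/β)]² for x > 0. Then both limits L₀ := lim_{x→0⁺} g(x) and L∞ := lim_{x→∞} g(x) exist and are finite, and g(x) ≤ max(L₀, L∞) for all x > 0. -/

import Mathlib

open Real Filter

theorem stmt_9 (β : ℝ) (hβ : 1 < β)
    (g : ℝ → ℝ)
    (hg : ∀ x, g x = (β / (1 - β))^2 *
      ((1 + x ^ (-β)) ^ ((1 - β)/β) - 2 ^ ((1 - β)/β))^2) :
    ∃ L0 Linf : ℝ,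
      Filter.Tendsto g (nhdsWithin 0 (Set.Ioi 0)) (nhds L0) ∧
      Filter.Tendsto g Filter.atTop (nhds Linf) ∧
      ∀ x > (0:ℝ), g x ≤ max L0 Linf := by
  have hβ0 : (0:ℝ) < β := lt_trans one_pos hβ
  set c := (β / (1 - β))^2 with hc
  set a := (2:ℝ) ^ ((1 - β)/β) with ha
  have hc0 : 0 ≤ c := sq_nonneg _
  have he : (1 - β)/β < 0 := div_neg_of_neg_of_pos (by linarith) hβ0
  have ha0 : 0 < a := Real.rpow_pos_of_pos two_pos _
  have ha1 : a ≤ 1 := Real.rpow_le_one_of_one_le_of_nonpos one_le_two he.le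
  have hgfun : g = fun x => c * ((1 + x ^ (-β)) ^ ((1 - β)/β) - a)^2 := funext hg
  refine ⟨c * a^2, c * (1 - a)^2, ?_, ?_, ?_⟩
  · -- limit at 0⁺
    have hxinv : Tendsto (fun x : ℝ => x ^ (-β)) (nhdsWithin 0 (Set.Ioi 0)) atTop := by
      have h := (tendsto_rpow_atTop hβ0).comp tendsto_inv_nhdsGT_zero
      refine h.congr' ?_
      filter_upwards [self_mem_nhdsWithin] with x hx
      simp only [Function.comp]
      rw [Real.inv_rpow (le_of_lt hx), ← Real.rpow_neg (le_of_lt hx)]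
    have h2 : Tendsto (fun x : ℝ => 1 + x ^ (-β)) (nhdsWithin 0 (Set.Ioi 0)) atTop :=
      tendsto_atTop_add_const_left _ 1 hxinv
    have h3 : Tendsto (fun y : ℝ => y ^ ((1 - β)/β)) atTop (nhds 0) := by
      have h4 := tendsto_rpow_neg_atTop (y := (β - 1)/β) (div_pos (by linarith) hβ0)
      have : -((β - 1)/β) = (1 - β)/β := by ring
      rwa [this] at h4
    have h5 : Tendsto (fun x : ℝ => (1 + x ^ (-β)) ^ ((1 - β)/β))
        (nhdsWithin 0 (Set.Ioi 0)) (nhds 0) := h3.comp h2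
    have h6 : Tendsto (fun x : ℝ => c * ((1 + x ^ (-β)) ^ ((1 - β)/β) - a)^2)
        (nhdsWithin 0 (Set.Ioi 0)) (nhds (c * ((0:ℝ) - a)^2)) :=
      ((h5.sub (tendsto_const_nhds (x := a))).pow 2).const_mul c
    rw [hgfun]
    convert h6 using 2
    ring
  · -- limit at ∞
    have h0 : Tendsto (fun x : ℝ => x ^ (-β)) atTop (nhds 0) :=
      tendsto_rpow_neg_atTop hβ0
    have h1 : Tendsto (fun x : ℝ => 1 + x ^ (-β)) atTop (nhds 1) := by
      have := h0.const_add 1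
      simpa using this
    have hcont : ContinuousAt (fun y : ℝ => y ^ ((1 - β)/β)) 1 :=
      Real.continuousAt_rpow_const 1 _ (Or.inl one_ne_zero)
    have h5 : Tendsto (fun x : ℝ => (1 + x ^ (-β)) ^ ((1 - β)/β)) atTop (nhds 1) := by
      have := hcont.tendsto.comp h1
      simpa [Real.one_rpow, Function.comp_def] using this
    have h6 : Tendsto (fun x : ℝ => c * ((1 + x ^ (-β)) ^ ((1 - β)/β) - a)^2)
        atTop (nhds (c * ((1:ℝ) - a)^2)) :=
      ((h5.sub (tendsto_const_nhds (x := a))).pow 2).const_mul c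
    rw [hgfun]
    exact h6
  · -- bound
    intro x hx
    rw [hg]
    set t := (1 + x ^ (-β)) ^ ((1 - β)/β) with ht
    have hxb : 0 < x ^ (-β) := Real.rpow_pos_of_pos hx _
    have ht0 : 0 ≤ t := Real.rpow_nonneg (by linarith) _
    have ht1 : t ≤ 1 := Real.rpow_le_one_of_one_le_of_nonpos (by linarith) he.le
    rcases le_total t a with h | h
    · have : (t - a)^2 ≤ a^2 := by nlinarith
      calc c * (t - a)^2 ≤ c * a^2 := by nlinarith
        _ ≤ max (c * a^2) (c * (1 - a)^2) := le_max_left _ _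
    · have : (t - a)^2 ≤ (1 - a)^2 := by nlinarith
      calc c * (t - a)^2 ≤ c * (1 - a)^2 := by nlinarith
        _ ≤ max (c * a^2) (c * (1 - a)^2) := le_max_right _ _
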